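/- If a*b*c - a - b - c = 0, and t = -3*(a^2+b^2+c^2) and u = -3*(a*b+a*c+b*c), then 9*c^6 + 3*t*c^4 + (u^2+6*t+12*u)*c^2 + 3*t + 6*u = 0. -/
import Mathlib

/-- On the slice `W = {(a,b,c) : abc = a+b+c}`, with `t = -3(a²+b²+c²)` and
`u = -3(ab+ac+bc)`, the coordinate `c` satisfies the sextic relation of the paper's Lemma. -/
theorem stmt9 {R : Type*} [CommRing R] (a b c t u : R)
    (habc : a*b*c - a - b - c = 0)
    (ht : t = -3*(a^2 + b^2 + c^2)) (hu : u = -3*(a*b + a*c + b*c)) :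
    9*c^6 + 3*t*c^4 + (u^2 + 6*t + 12*u)*c^2 + 3*t + 6*u = 0 := by
  subst ht hu
  linear_combination (9*a*b*c + 18*a*c^2 + 9*a + 18*b*c^2 + 9*b + 18*c^3 + 9*c) * habc
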